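/- Let Q be a Markov kernel on a Polish space X preserving a probability measure m, with transition densities pₙ(x,·) with respect to m (so Qⁿf(x) = ∫ pₙ(x,y) f(y) m(dy) and ∫ pₙ(x,y) m(dx) = 1 for all y). Suppose that for some n ∈ ℕ and ε > 0, sup_x ∫ |pₙ(x,y) − 1| m(dy) ≤ ε. Then for every mean-zero f ∈ L²(m), ‖Qⁿ f‖_{L²(m)} ≤ √(2ε) ‖f‖_{L²(m)}. -/

import Mathlib

open MeasureTheory
open scoped ENNReal NNReal

/-- if a Markov kernel with invariant probability measure `m` has
`n`-step transition densities `p` (rows and columns integrating to 1) with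
`sup_x ∫ |p(x,y) − 1| dm(y) ≤ ε`, then for every mean-zero `f ∈ L²(m)`,
`‖Qⁿ f‖_{L²} ≤ √(2ε) ‖f‖_{L²}`. -/
theorem stmt6 {X : Type*} [MeasurableSpace X]
    (m : Measure X) [IsProbabilityMeasure m]
    (p : X → X → ℝ) (hpmeas : Measurable (Function.uncurry p))
    (hpnn : ∀ x y, 0 ≤ p x y)
    (hrow : ∀ x, ∫ y, p x y ∂m = 1)
    (hcol : ∀ y, ∫ x, p x y ∂m = 1)
    (ε : ℝ) (hε : 0 < ε)
    (hsup : ∀ x, ∫ y, |p x y - 1| ∂m ≤ ε)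
    (f : X → ℝ) (hf : MemLp f 2 m) (hmean : ∫ x, f x ∂m = 0) :
    eLpNorm (fun x => ∫ y, p x y * f y ∂m) 2 m ≤
      ENNReal.ofReal (Real.sqrt (2 * ε)) * eLpNorm f 2 m := by
  classical
  -- measurable version of f
  have hfm : AEMeasurable f m := hf.aestronglyMeasurable.aemeasurable
  set f' : X → ℝ := hfm.mk f with hf'def
  have hf'meas : Measurable f' := hfm.measurable_mk
  have hff' : f =ᵐ[m] f' := hfm.ae_eq_mk
  -- slice measurability
  have hpx : ∀ x, Measurable fun y => p x y := fun x =>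
    hpmeas.comp measurable_prodMk_left
  have hpy : ∀ y, Measurable fun x => p x y := fun y =>
    hpmeas.comp (measurable_id.prodMk measurable_const)
  set a : X → X → ℝ≥0∞ := fun x y => ENNReal.ofReal |p x y - 1| with ha
  have hax : ∀ x, Measurable fun y => a x y := fun x =>
    ((hpx x).sub measurable_const).abs.ennreal_ofReal
  have hay : ∀ y, Measurable fun x => a x y := fun y =>
    ((hpy y).sub measurable_const).abs.ennreal_ofReal
  -- integrability of rows and columns
  have hrowint : ∀ x, Integrable (fun y => p x y) m := by
    intro x; by_contra h
    have := hrow x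
    rw [integral_undef h] at this
    norm_num at this
  have hcolint : ∀ y, Integrable (fun x => p x y) m := by
    intro y; by_contra h
    have := hcol y
    rw [integral_undef h] at this
    norm_num at this
  -- row bound
  have hrowbd : ∀ x, ∫⁻ y, a x y ∂m ≤ ENNReal.ofReal ε := by
    intro x
    have hint : Integrable (fun y => |p x y - 1|) m :=
      ((hrowint x).sub (integrable_const 1)).abs
    rw [ha]
    rw [← ofReal_integral_eq_lintegral_ofReal hint
      (Filter.Eventually.of_forall fun y => abs_nonneg _)]
    exact ENNReal.ofReal_le_ofReal (hsup x)
  -- column bound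
  have hcolbd : ∀ y, ∫⁻ x, a x y ∂m ≤ 2 := by
    intro y
    have h1 : ∀ x, a x y ≤ ENNReal.ofReal (p x y) + 1 := by
      intro x
      have habs : |p x y - 1| ≤ p x y + 1 := by
        have := abs_sub (p x y) 1
        simpa [abs_of_nonneg (hpnn x y)] using this
      calc a x y ≤ ENNReal.ofReal (p x y + 1) := ENNReal.ofReal_le_ofReal habs
        _ = ENNReal.ofReal (p x y) + ENNReal.ofReal 1 :=
            ENNReal.ofReal_add (hpnn x y) zero_le_one
        _ = ENNReal.ofReal (p x y) + 1 := by rw [ENNReal.ofReal_one]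
    calc ∫⁻ x, a x y ∂m ≤ ∫⁻ x, (ENNReal.ofReal (p x y) + 1) ∂m := lintegral_mono h1
      _ = (∫⁻ x, ENNReal.ofReal (p x y) ∂m) + ∫⁻ _, 1 ∂m :=
          lintegral_add_right _ measurable_const
      _ = ENNReal.ofReal (∫ x, p x y ∂m) + 1 := by
          rw [ofReal_integral_eq_lintegral_ofReal (hcolint y)
            (Filter.Eventually.of_forall fun x => hpnn x y), lintegral_one, measure_univ]
      _ = 2 := by rw [hcol y, ENNReal.ofReal_one]; norm_num
  set c : X → ℝ≥0∞ := fun y => (‖f' y‖₊ : ℝ≥0∞) with hc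
  have hcmeas : Measurable c := hf'meas.nnnorm.coe_nnreal_ennreal
  -- step 1 : pointwise bound on the integral
  have hstep1 : ∀ x, (‖∫ y, p x y * f y ∂m‖₊ : ℝ≥0∞) ≤ ∫⁻ y, a x y * c y ∂m := by
    intro x
    have heq : ∫⁻ y, (‖(p x y - 1) * f y‖₊ : ℝ≥0∞) ∂m = ∫⁻ y, a x y * c y ∂m := by
      apply lintegral_congr_ae
      filter_upwards [hff'] with y hy
      rw [nnnorm_mul, ENNReal.coe_mul, ← enorm_eq_nnnorm, Real.enorm_eq_ofReal_abs, hc, ha, hy]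
    by_cases hint : Integrable (fun y => p x y * f y) m
    · have hfint : Integrable f m := hf.integrable one_le_two
      have hgx : ∫ y, p x y * f y ∂m = ∫ y, (p x y - 1) * f y ∂m := by
        rw [show (fun y => (p x y - 1) * f y) = fun y => p x y * f y - f y from
          funext fun y => by ring]
        rw [integral_sub hint hfint, hmean, sub_zero]
      rw [hgx, ← heq]
      exact enorm_integral_le_lintegral_enorm _
    · rw [integral_undef hint]
      simp
  -- step 2 : Cauchy–Schwarz
  have hCS : ∀ x, (∫⁻ y, a x y * c y ∂m) ^ (2 : ℝ) ≤
      ENNReal.ofReal ε * ∫⁻ y, a x y * c y ^ (2 : ℝ) ∂m := by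
    intro x
    have hconj : Real.HolderConjugate 2 2 := Real.HolderConjugate.two_two
    have hF : AEMeasurable (fun y => a x y ^ (1/2 : ℝ)) m :=
      ((hax x).pow_const _).aemeasurable
    have hG : AEMeasurable (fun y => a x y ^ (1/2 : ℝ) * c y) m :=
      (((hax x).pow_const _).mul hcmeas).aemeasurable
    have key := ENNReal.lintegral_mul_le_Lp_mul_Lq m hconj hF hG
    have h1 : ∀ y, (fun y => a x y ^ (1/2 : ℝ)) y * (fun y => a x y ^ (1/2 : ℝ) * c y) y
        = a x y * c y := by
      intro y
      rw [← mul_assoc, ← ENNReal.rpow_add_of_nonneg _ _ (by norm_num) (by norm_num)]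
      norm_num
    have h2 : ∀ y, (a x y ^ (1/2 : ℝ)) ^ (2 : ℝ) = a x y := by
      intro y
      rw [← ENNReal.rpow_mul]
      norm_num
    have h3 : ∀ y, (a x y ^ (1/2 : ℝ) * c y) ^ (2 : ℝ) = a x y * c y ^ (2 : ℝ) := by
      intro y
      rw [ENNReal.mul_rpow_of_nonneg _ _ (by norm_num : (0:ℝ) ≤ 2), h2 y]
    have key2 : (∫⁻ y, a x y * c y ∂m) ≤
        (∫⁻ y, a x y ∂m) ^ (1/2 : ℝ) * (∫⁻ y, a x y * c y ^ (2:ℝ) ∂m) ^ (1/2 : ℝ) := by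
      calc (∫⁻ y, a x y * c y ∂m)
          = ∫⁻ y, ((fun y => a x y ^ (1/2:ℝ)) * fun y => a x y ^ (1/2:ℝ) * c y) y ∂m := by
            apply lintegral_congr; intro y
            simp only [Pi.mul_apply]; rw [h1 y]
        _ ≤ (∫⁻ y, (a x y ^ (1/2:ℝ)) ^ (2:ℝ) ∂m) ^ (1/(2:ℝ)) *
            (∫⁻ y, (a x y ^ (1/2:ℝ) * c y) ^ (2:ℝ) ∂m) ^ (1/(2:ℝ)) := key
        _ = (∫⁻ y, a x y ∂m) ^ (1/2 : ℝ) * (∫⁻ y, a x y * c y ^ (2:ℝ) ∂m) ^ (1/2 : ℝ) := by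
            congr 1
            · congr 1; apply lintegral_congr; intro y; exact h2 y
            · congr 1; apply lintegral_congr; intro y; exact h3 y
    calc (∫⁻ y, a x y * c y ∂m) ^ (2 : ℝ)
        ≤ ((∫⁻ y, a x y ∂m) ^ (1/2 : ℝ) * (∫⁻ y, a x y * c y ^ (2:ℝ) ∂m) ^ (1/2 : ℝ)) ^ (2:ℝ) :=
          ENNReal.rpow_le_rpow key2 (by norm_num)
      _ = (∫⁻ y, a x y ∂m) * (∫⁻ y, a x y * c y ^ (2:ℝ) ∂m) := by
          rw [ENNReal.mul_rpow_of_nonneg _ _ (by norm_num : (0:ℝ) ≤ 2),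
            ← ENNReal.rpow_mul, ← ENNReal.rpow_mul]
          norm_num [ENNReal.rpow_one]
      _ ≤ ENNReal.ofReal ε * ∫⁻ y, a x y * c y ^ (2:ℝ) ∂m :=
          mul_le_mul_left (hrowbd x) _
  -- main estimate on the squared L² norm
  have hmain : ∫⁻ x, (‖∫ y, p x y * f y ∂m‖₊ : ℝ≥0∞) ^ (2:ℝ) ∂m ≤
      ENNReal.ofReal (2 * ε) * ∫⁻ y, c y ^ (2:ℝ) ∂m := by
    have swap_meas : AEMeasurable (fun z : X × X => a z.1 z.2 * c z.2 ^ (2:ℝ)) (m.prod m) := by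
      have : Measurable fun z : X × X => a z.1 z.2 :=
        ((hpmeas.sub measurable_const).abs).ennreal_ofReal
      exact (this.mul (((hcmeas.comp measurable_snd)).pow_const _)).aemeasurable
    calc ∫⁻ x, (‖∫ y, p x y * f y ∂m‖₊ : ℝ≥0∞) ^ (2:ℝ) ∂m
        ≤ ∫⁻ x, (∫⁻ y, a x y * c y ∂m) ^ (2:ℝ) ∂m := by
          apply lintegral_mono; intro x
          exact ENNReal.rpow_le_rpow (hstep1 x) (by norm_num)
      _ ≤ ∫⁻ x, ENNReal.ofReal ε * ∫⁻ y, a x y * c y ^ (2:ℝ) ∂m ∂m :=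
          lintegral_mono fun x => hCS x
      _ = ENNReal.ofReal ε * ∫⁻ x, ∫⁻ y, a x y * c y ^ (2:ℝ) ∂m ∂m :=
          lintegral_const_mul' _ _ ENNReal.ofReal_ne_top
      _ = ENNReal.ofReal ε * ∫⁻ y, ∫⁻ x, a x y * c y ^ (2:ℝ) ∂m ∂m := by
          rw [lintegral_lintegral_swap swap_meas]
      _ = ENNReal.ofReal ε * ∫⁻ y, (∫⁻ x, a x y ∂m) * c y ^ (2:ℝ) ∂m := by
          congr 1
          apply lintegral_congr; intro y
          rw [lintegral_mul_const' _ _ (by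
            exact ENNReal.rpow_ne_top_of_nonneg (by norm_num) ENNReal.coe_ne_top)]
      _ ≤ ENNReal.ofReal ε * ∫⁻ y, 2 * c y ^ (2:ℝ) ∂m := by
          apply mul_le_mul_right
          apply lintegral_mono; intro y
          exact mul_le_mul_left (hcolbd y) _
      _ = ENNReal.ofReal (2 * ε) * ∫⁻ y, c y ^ (2:ℝ) ∂m := by
          rw [lintegral_const_mul' _ _ (by norm_num), ← mul_assoc]
          congr 1
          rw [ENNReal.ofReal_mul (by norm_num : (0:ℝ) ≤ 2), ENNReal.ofReal_ofNat, mul_comm]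
  -- conclude
  have h2 : (2 : ℝ≥0∞) ≠ 0 := by norm_num
  have h2' : (2 : ℝ≥0∞) ≠ ⊤ := by norm_num
  have hg_eq : eLpNorm (fun x => ∫ y, p x y * f y ∂m) 2 m =
      (∫⁻ x, (‖∫ y, p x y * f y ∂m‖₊ : ℝ≥0∞) ^ (2:ℝ) ∂m) ^ (1/2 : ℝ) := by
    rw [eLpNorm_eq_lintegral_rpow_enorm_toReal h2 h2']
    norm_num
    rfl
  have hf_eq : eLpNorm f 2 m = (∫⁻ y, c y ^ (2:ℝ) ∂m) ^ (1/2 : ℝ) := by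
    rw [eLpNorm_congr_ae hff', eLpNorm_eq_lintegral_rpow_enorm_toReal h2 h2']
    norm_num
    rfl
  rw [hg_eq, hf_eq]
  calc (∫⁻ x, (‖∫ y, p x y * f y ∂m‖₊ : ℝ≥0∞) ^ (2:ℝ) ∂m) ^ (1/2 : ℝ)
      ≤ (ENNReal.ofReal (2 * ε) * ∫⁻ y, c y ^ (2:ℝ) ∂m) ^ (1/2 : ℝ) :=
        ENNReal.rpow_le_rpow hmain (by norm_num)
    _ = ENNReal.ofReal (2 * ε) ^ (1/2 : ℝ) * (∫⁻ y, c y ^ (2:ℝ) ∂m) ^ (1/2 : ℝ) :=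
        ENNReal.mul_rpow_of_nonneg _ _ (by norm_num)
    _ = ENNReal.ofReal (Real.sqrt (2 * ε)) * (∫⁻ y, c y ^ (2:ℝ) ∂m) ^ (1/2 : ℝ) := by
        congr 1
        rw [ENNReal.ofReal_rpow_of_pos (by positivity), Real.sqrt_eq_rpow]
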